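/- arXiv:1705.08138 — 4 statements merged into one kernel-verified Lean document; each statement's English description precedes it below -/
import Mathlib

section
/- Let k > 0 and 0 < κ ≤ k² be real numbers. Then for all real numbers b ≥ 0 and m ≥ 0, the complex number b − (k² + iκ)m satisfies |b − (k² + iκ)m| ≥ (κ/(2√2 k²))·(b + k²m). -/
open Complex

/-- Let `k > 0` and `0 < κ ≤ k²` be real numbers. Then for all real numbers `b ≥ 0` and
`m ≥ 0`, the complex number `b − (k² + iκ)m` satisfies
`|b − (k² + iκ)m| ≥ (κ/(2√2 k²))·(b + k²m)`. -/
theorem scalar_coercivity (k κ : ℝ) (hk : 0 < k) (hκ0 : 0 < κ) (hκ : κ ≤ k ^ 2)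
    (b m : ℝ) (hb : 0 ≤ b) (hm : 0 ≤ m) :
    κ / (2 * Real.sqrt 2 * k ^ 2) * (b + k ^ 2 * m) ≤
      ‖(b : ℂ) - ((k : ℂ) ^ 2 + (κ : ℂ) * I) * (m : ℂ)‖ := by
  have hre : ((b : ℂ) - ((k : ℂ) ^ 2 + (κ : ℂ) * I) * (m : ℂ)).re = b - k ^ 2 * m := by
    simp [pow_two]
  have him : ((b : ℂ) - ((k : ℂ) ^ 2 + (κ : ℂ) * I) * (m : ℂ)).im = -(κ * m) := by
    simp [pow_two]
  rw [Complex.norm_def, Complex.normSq_apply, hre, him]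
  set X : ℝ := (b - k ^ 2 * m) * (b - k ^ 2 * m) + -(κ * m) * -(κ * m) with hX
  have hXnn : 0 ≤ X := by
    nlinarith [mul_self_nonneg (b - k ^ 2 * m), mul_self_nonneg (κ * m)]
  have hSnn : 0 ≤ Real.sqrt X := Real.sqrt_nonneg X
  have h2nn : 0 < Real.sqrt 2 := Real.sqrt_pos.2 (by norm_num)
  rw [div_mul_eq_mul_div, div_le_iff₀ (by positivity)]
  have hexp : (Real.sqrt X * (2 * Real.sqrt 2 * k ^ 2)) ^ 2 = 8 * k ^ 4 * X := by
    rw [mul_pow, Real.sq_sqrt hXnn, mul_pow, mul_pow,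
      Real.sq_sqrt (by norm_num : (0:ℝ) ≤ 2)]
    ring
  have key : (κ * (b + k ^ 2 * m)) ^ 2 ≤ (Real.sqrt X * (2 * Real.sqrt 2 * k ^ 2)) ^ 2 := by
    rw [hexp, hX]
    rcases le_total b (k ^ 2 * m) with h | h
    · have hlin : κ * (b + k ^ 2 * m) ≤ 2 * (k ^ 2 * (k ^ 2 * m - b) + κ * (k ^ 2 * m)) := by
        nlinarith [mul_nonneg (sub_nonneg.2 h) hκ0.le]
      nlinarith [sq_nonneg (k ^ 2 * (k ^ 2 * m - b) - κ * (k ^ 2 * m)), hlin,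
        mul_nonneg hκ0.le (by positivity : (0:ℝ) ≤ b + k ^ 2 * m),
        mul_le_mul_of_nonneg_left hlin (mul_nonneg hκ0.le (by positivity : (0:ℝ) ≤ b + k ^ 2 * m)),
        mul_le_mul_of_nonneg_right hκ hm]
    · have hlin : κ * (b + k ^ 2 * m) ≤ 2 * (k ^ 2 * (b - k ^ 2 * m) + κ * (k ^ 2 * m)) := by
        nlinarith [mul_nonneg (sub_nonneg.2 h) (by linarith : (0:ℝ) ≤ k ^ 2 - κ / 2)]
      nlinarith [sq_nonneg (k ^ 2 * (b - k ^ 2 * m) - κ * (k ^ 2 * m)), hlin,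
        mul_le_mul_of_nonneg_left hlin (mul_nonneg hκ0.le (by positivity : (0:ℝ) ≤ b + k ^ 2 * m)),
        mul_le_mul_of_nonneg_right hκ hm]
  have h1 : 0 ≤ κ * (b + k ^ 2 * m) := by positivity
  have h2' : 0 ≤ Real.sqrt X * (2 * Real.sqrt 2 * k ^ 2) := by positivity
  nlinarith [key, h1, h2']
end

section
/- Let E and F be complex inner product spaces, let L : E → F be a linear map, let k > 0 and 0 < κ ≤ k² be real. Then for every v ∈ E, the quantity a(v) := ‖Lv‖² − (k² + iκ)‖v‖² (a complex number) satisfies |a(v)| ≥ (κ/(2√2 k²))·(‖Lv‖² + k²‖v‖²). -/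
open Complex

/-- Let `E` and `F` be complex inner product spaces, `L : E → F` a linear map,
`k > 0` and `0 < κ ≤ k²` real. Then for every `v ∈ E`, the complex number
`a(v) := ‖Lv‖² − (k² + iκ)‖v‖²` satisfies `|a(v)| ≥ (κ/(2√2 k²))·(‖Lv‖² + k²‖v‖²)`. -/
theorem form_coercivity {E F : Type*} [NormedAddCommGroup E] [InnerProductSpace ℂ E]
    [NormedAddCommGroup F] [InnerProductSpace ℂ F] (L : E →ₗ[ℂ] F)
    (k κ : ℝ) (hk : 0 < k) (hκ0 : 0 < κ) (hκ : κ ≤ k ^ 2) (v : E) :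
    κ / (2 * Real.sqrt 2 * k ^ 2) * (‖L v‖ ^ 2 + k ^ 2 * ‖v‖ ^ 2) ≤
      ‖(‖L v‖ : ℂ) ^ 2 - ((k : ℂ) ^ 2 + (κ : ℂ) * I) * (‖v‖ : ℂ) ^ 2‖ := by
  set a := ‖L v‖ ^ 2 with ha
  set b := ‖v‖ ^ 2 with hb
  have ha0 : 0 ≤ a := sq_nonneg _
  have hb0 : 0 ≤ b := sq_nonneg _
  have hz : ((‖L v‖ : ℂ) ^ 2 - ((k : ℂ) ^ 2 + (κ : ℂ) * I) * (‖v‖ : ℂ) ^ 2)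
      = ((a - k ^ 2 * b : ℝ) : ℂ) + ((-(κ * b) : ℝ) : ℂ) * I := by
    simp only [ha, hb]; push_cast; ring
  rw [hz, Complex.norm_add_mul_I]
  set x := a - k ^ 2 * b with hx
  set y := κ * b with hy
  have hy0 : 0 ≤ y := mul_nonneg hκ0.le hb0
  have hs2 : (0:ℝ) < Real.sqrt 2 := Real.sqrt_pos.2 (by norm_num)
  have hs2sq : (Real.sqrt 2) ^ 2 = 2 := Real.sq_sqrt (by norm_num)
  have hk2 : (0:ℝ) < k ^ 2 := by positivity
  -- key inequality: κ (a + k² b) ≤ 2 k² (|x| + y)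
  have key : κ * (a + k ^ 2 * b) ≤ 2 * k ^ 2 * (|x| + y) := by
    have h1 : κ * a ≤ κ * |x| + κ * (k ^ 2 * b) := by
      have : a = x + k ^ 2 * b := by rw [hx]; ring
      nlinarith [le_abs_self x, abs_nonneg x]
    nlinarith [abs_nonneg x, mul_le_mul_of_nonneg_right hκ (abs_nonneg x)]
  have h2 : (|x| + y) ^ 2 ≤ 2 * (x ^ 2 + (-y) ^ 2) := by
    nlinarith [sq_nonneg (|x| - y), _root_.sq_abs x]
  have hLHS0 : 0 ≤ κ / (2 * Real.sqrt 2 * k ^ 2) * (a + k ^ 2 * b) := by positivity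
  rw [show (-(κ * b) : ℝ) = -y by rw [hy]]
  rw [Real.le_sqrt hLHS0 (by positivity)]
  have hsq : (κ * (a + k ^ 2 * b)) ^ 2 ≤ (2 * k ^ 2 * (|x| + y)) ^ 2 := by
    apply sq_le_sq' _ key
    nlinarith [mul_nonneg hκ0.le (by nlinarith : (0:ℝ) ≤ a + k ^ 2 * b), mul_nonneg (by positivity : (0:ℝ) ≤ 2 * k ^ 2) (by positivity : (0:ℝ) ≤ |x| + y)]
  have expand : (κ / (2 * Real.sqrt 2 * k ^ 2) * (a + k ^ 2 * b)) ^ 2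
      = (κ * (a + k ^ 2 * b)) ^ 2 / (8 * k ^ 4) := by
    rw [mul_pow, div_pow, show (2 * Real.sqrt 2 * k ^ 2) ^ 2 = 8 * k ^ 4 from by nlinarith [hs2sq]]
    ring
  rw [expand]
  rw [div_le_iff₀ (by positivity)]
  calc (κ * (a + k ^ 2 * b)) ^ 2 ≤ (2 * k ^ 2 * (|x| + y)) ^ 2 := hsq
    _ = 4 * k ^ 4 * (|x| + y) ^ 2 := by ring
    _ ≤ 4 * k ^ 4 * (2 * (x ^ 2 + (-y) ^ 2)) :=
        mul_le_mul_of_nonneg_left h2 (by positivity)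
    _ = (x ^ 2 + (-y) ^ 2) * (8 * k ^ 4) := by ring
end

section
/- Let E and F be complex inner product spaces, let L : E → F be a linear map, let k > 0 and κ ∈ ℝ. Then for all u, v ∈ E, |⟨Lu, Lv⟩ − (k² + iκ)⟨u, v⟩| ≤ √(1 + κ²/k⁴) · √(‖Lu‖² + k²‖u‖²) · √(‖Lv‖² + k²‖v‖²). -/
open Complex
open scoped InnerProductSpace

/-- Continuity of the sesquilinear form `a_κ(u,v) = ⟨Lu, Lv⟩ − (k² + iκ)⟨u,v⟩` with
respect to the `k`-weighted norm `‖v‖_{curl,k} = √(‖Lv‖² + k²‖v‖²)`. -/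
theorem form_continuity {E F : Type*} [NormedAddCommGroup E] [InnerProductSpace ℂ E]
    [NormedAddCommGroup F] [InnerProductSpace ℂ F] (L : E →ₗ[ℂ] F)
    (k κ : ℝ) (hk : 0 < k) (u v : E) :
    ‖⟪L u, L v⟫_ℂ - ((k : ℂ) ^ 2 + (κ : ℂ) * I) * ⟪u, v⟫_ℂ‖ ≤
      Real.sqrt (1 + κ ^ 2 / k ^ 4) * Real.sqrt (‖L u‖ ^ 2 + k ^ 2 * ‖u‖ ^ 2) *
        Real.sqrt (‖L v‖ ^ 2 + k ^ 2 * ‖v‖ ^ 2) := by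
  set a := ‖L u‖ with ha
  set b := ‖L v‖ with hb
  set c := k * ‖u‖ with hc
  set d := k * ‖v‖ with hd
  have ha0 : 0 ≤ a := norm_nonneg _
  have hb0 : 0 ≤ b := norm_nonneg _
  have hc0 : 0 ≤ c := mul_nonneg hk.le (norm_nonneg _)
  have hd0 : 0 ≤ d := mul_nonneg hk.le (norm_nonneg _)
  set C := Real.sqrt (1 + κ ^ 2 / k ^ 4) with hC
  have hC1 : 1 ≤ C := by
    have h : Real.sqrt 1 ≤ Real.sqrt (1 + κ ^ 2 / k ^ 4) :=
      Real.sqrt_le_sqrt (le_add_of_nonneg_right (by positivity))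
    simpa only [Real.sqrt_one] using h
  have hC0 : 0 ≤ C := le_trans zero_le_one hC1
  -- |k² + iκ| = k² * C
  have hCk : k ^ 2 * C = Real.sqrt (k ^ 4 + κ ^ 2) := by
    rw [hC, ← Real.sqrt_sq (by positivity : (0:ℝ) ≤ k ^ 2),
      ← Real.sqrt_mul (by positivity)]
    congr 1
    field_simp
  have habs : ‖(k : ℂ) ^ 2 + (κ : ℂ) * I‖ = k ^ 2 * C := by
    rw [hCk, Complex.norm_def, Complex.normSq_apply]
    congr 1
    simp [← Complex.ofReal_pow]
    ring
  have step1 : ‖⟪L u, L v⟫_ℂ - ((k : ℂ) ^ 2 + (κ : ℂ) * I) * ⟪u, v⟫_ℂ‖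
      ≤ a * b + (k ^ 2 * C) * (‖u‖ * ‖v‖) := by
    calc ‖⟪L u, L v⟫_ℂ - ((k : ℂ) ^ 2 + (κ : ℂ) * I) * ⟪u, v⟫_ℂ‖
        ≤ ‖⟪L u, L v⟫_ℂ‖ +
          ‖((k : ℂ) ^ 2 + (κ : ℂ) * I) * ⟪u, v⟫_ℂ‖ := by
          exact (norm_sub_le _ _)
      _ ≤ a * b + (k ^ 2 * C) * (‖u‖ * ‖v‖) := by
          rw [norm_mul, habs]
          gcongr
          · exact norm_inner_le_norm _ _
          · exact norm_inner_le_norm _ _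
  have step2 : a * b + (k ^ 2 * C) * (‖u‖ * ‖v‖) ≤ C * (a * b + c * d) := by
    have : (k ^ 2 * C) * (‖u‖ * ‖v‖) = C * (c * d) := by rw [hc, hd]; ring
    rw [this]
    nlinarith [mul_nonneg ha0 hb0]
  -- Cauchy-Schwarz in ℝ²
  have step3 : a * b + c * d ≤
      Real.sqrt (a ^ 2 + c ^ 2) * Real.sqrt (b ^ 2 + d ^ 2) := by
    have key : a * b + c * d ≤ Real.sqrt ((a ^ 2 + c ^ 2) * (b ^ 2 + d ^ 2)) := by
      rw [Real.le_sqrt (by positivity)]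
      · nlinarith [sq_nonneg (a * d - b * c)]
      · positivity
    rwa [Real.sqrt_mul (by positivity)] at key
  have hrw1 : a ^ 2 + c ^ 2 = ‖L u‖ ^ 2 + k ^ 2 * ‖u‖ ^ 2 := by rw [ha, hc]; ring
  have hrw2 : b ^ 2 + d ^ 2 = ‖L v‖ ^ 2 + k ^ 2 * ‖v‖ ^ 2 := by rw [hb, hd]; ring
  calc ‖⟪L u, L v⟫_ℂ - ((k : ℂ) ^ 2 + (κ : ℂ) * I) * ⟪u, v⟫_ℂ‖
      ≤ C * (a * b + c * d) := le_trans step1 step2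
    _ ≤ C * (Real.sqrt (a ^ 2 + c ^ 2) * Real.sqrt (b ^ 2 + d ^ 2)) := by
        exact mul_le_mul_of_nonneg_left step3 hC0
    _ = C * Real.sqrt (‖L u‖ ^ 2 + k ^ 2 * ‖u‖ ^ 2) *
        Real.sqrt (‖L v‖ ^ 2 + k ^ 2 * ‖v‖ ^ 2) := by rw [hrw1, hrw2]; ring
end

section
/- Let E be a complex inner product space and let T : E → E be a continuous linear operator. Suppose there are constants c > 0 and C > 0 such that |⟨Tv, v⟩| ≥ c‖v‖² for all v ∈ E and ‖Tv‖ ≤ C‖v‖ for all v ∈ E. Then for every r⁰ ∈ E and every natural number m there exists a polynomial p with complex coefficients satisfying deg p ≤ m and p(0) = 1 such that ‖p(T) r⁰‖ ≤ (1 − c²/C²)^{m/2} · ‖r⁰‖, where p(T) denotes the operator obtained by evaluating p at T. -/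
open scoped InnerProductSpace

lemma gmres_step {E : Type*} [NormedAddCommGroup E] [InnerProductSpace ℂ E]
    (T : E →L[ℂ] E) (c C : ℝ) (hc : 0 < c) (hC : 0 < C)
    (hcoer : ∀ v : E, c * ‖v‖ ^ 2 ≤ ‖⟪T v, v⟫_ℂ‖)
    (hbound : ∀ v : E, ‖T v‖ ≤ C * ‖v‖) (v : E) :
    ∃ α : ℂ, ‖v - α • T v‖ ^ 2 ≤ (1 - c ^ 2 / C ^ 2) * ‖v‖ ^ 2 := by
  by_cases hv : v = 0
  · exact ⟨0, by simp [hv]⟩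
  set w : ℂ := ⟪v, T v⟫_ℂ with hw
  have hnv : 0 < ‖v‖ := norm_pos_iff.mpr hv
  have habs : c * ‖v‖ ^ 2 ≤ ‖w‖ := by
    have h := hcoer v
    have h2 : ‖⟪T v, v⟫_ℂ‖ = ‖w‖ := by
      rw [hw, ← inner_conj_symm (T v) v, Complex.norm_conj]
    rwa [h2] at h
  set a : ℝ := ‖w‖ with ha
  have ha0 : 0 < a := lt_of_lt_of_le (by positivity) habs
  have haC : (a : ℂ) ≠ 0 := by exact_mod_cast ha0.ne'
  set s : ℝ := c / C ^ 2 with hs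
  have hs0 : 0 < s := by positivity
  refine ⟨((s / a : ℝ) : ℂ) * (starRingEnd ℂ) w, ?_⟩
  have key : ⟪v, (((s / a : ℝ) : ℂ) * (starRingEnd ℂ) w) • T v⟫_ℂ = ((s * a : ℝ) : ℂ) := by
    rw [inner_smul_right, ← hw]
    have hcw : (starRingEnd ℂ) w * w = ((a ^ 2 : ℝ) : ℂ) := by
      rw [mul_comm, Complex.mul_conj, ha, Complex.sq_norm]
    rw [mul_assoc, hcw]
    push_cast
    field_simp
  have hnorm : ‖(((s / a : ℝ) : ℂ) * (starRingEnd ℂ) w) • T v‖ = s * ‖T v‖ := by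
    rw [norm_smul]
    simp only [norm_mul, Complex.norm_real, RCLike.norm_conj]
    rw [← ha, Real.norm_eq_abs, abs_div, abs_of_pos hs0, abs_of_pos ha0]
    field_simp
  rw [@norm_sub_sq ℂ _ _ _ _, key, hnorm]
  have hre : (RCLike.re (((s * a : ℝ) : ℂ)) : ℝ) = s * a := by simp
  rw [hre]
  have h1 : ‖T v‖ ≤ C * ‖v‖ := hbound v
  have h2 : c * ‖v‖ ^ 2 ≤ a := habs
  have hTv0 : 0 ≤ ‖T v‖ := norm_nonneg _
  have hT2 : ‖T v‖ ^ 2 ≤ C ^ 2 * ‖v‖ ^ 2 := by nlinarith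
  have h3 : (s * ‖T v‖) ^ 2 ≤ s ^ 2 * C ^ 2 * ‖v‖ ^ 2 := by
    have := mul_le_mul_of_nonneg_left hT2 (sq_nonneg s)
    nlinarith
  have hsa : s * (c * ‖v‖ ^ 2) ≤ s * a := by nlinarith
  have hsC : s ^ 2 * C ^ 2 = c ^ 2 / C ^ 2 := by
    rw [hs]; field_simp
  have hsc : s * c = c ^ 2 / C ^ 2 := by rw [hs]; field_simp
  nlinarith [sq_nonneg ‖v‖]


/-- Elman-type GMRES convergence estimate: if `T` is a continuous linear operator on a
complex inner product space with `|⟨Tv, v⟩| ≥ c‖v‖²` and `‖Tv‖ ≤ C‖v‖` for constants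
`c, C > 0`, then for every `r⁰` and `m : ℕ` there is a polynomial `p` of degree `≤ m`
with `p(0) = 1` and `‖p(T) r⁰‖ ≤ (1 − c²/C²)^{m/2}·‖r⁰‖`. -/
theorem gmres_convergence {E : Type*} [NormedAddCommGroup E] [InnerProductSpace ℂ E]
    (T : E →L[ℂ] E) (c C : ℝ) (hc : 0 < c) (hC : 0 < C)
    (hcoer : ∀ v : E, c * ‖v‖ ^ 2 ≤ ‖⟪T v, v⟫_ℂ‖)
    (hbound : ∀ v : E, ‖T v‖ ≤ C * ‖v‖)
    (r0 : E) (m : ℕ) :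
    ∃ p : Polynomial ℂ, p.natDegree ≤ m ∧ p.eval 0 = 1 ∧
      ‖(Polynomial.aeval T p) r0‖ ≤ (1 - c ^ 2 / C ^ 2) ^ ((m : ℝ) / 2) * ‖r0‖ := by
  by_cases hr0 : r0 = 0
  · exact ⟨1, by simp, by simp, by simp [hr0]⟩
  have hnr : 0 < ‖r0‖ := norm_pos_iff.mpr hr0
  have hcC : c ≤ C := by
    have h := hcoer r0
    have h2 : ‖⟪T r0, r0⟫_ℂ‖ ≤ ‖T r0‖ * ‖r0‖ := by
      exact norm_inner_le_norm _ _
    have h3 := hbound r0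
    have h4 : ‖T r0‖ * ‖r0‖ ≤ C * ‖r0‖ ^ 2 := by nlinarith [norm_nonneg r0]
    have h5 : c * ‖r0‖ ^ 2 ≤ C * ‖r0‖ ^ 2 := le_trans h (le_trans h2 h4)
    nlinarith [pow_pos hnr 2]
  set B := 1 - c ^ 2 / C ^ 2 with hBdef
  have hB0 : 0 ≤ B := by
    have h1 : c ^ 2 ≤ C ^ 2 := by nlinarith
    have h2 : c ^ 2 / C ^ 2 ≤ 1 := by
      rw [div_le_one (by positivity)]; exact h1
    simp only [hBdef]; linarith
  have main : ∀ n : ℕ, ∃ p : Polynomial ℂ, p.natDegree ≤ n ∧ p.eval 0 = 1 ∧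
      ‖(Polynomial.aeval T p) r0‖ ^ 2 ≤ B ^ n * ‖r0‖ ^ 2 := by
    intro n
    induction n with
    | zero => exact ⟨1, by simp, by simp, by simp⟩
    | succ n ih =>
      obtain ⟨p, hdeg, heval, hbnd⟩ := ih
      set v := (Polynomial.aeval T p) r0 with hv
      obtain ⟨α, hα⟩ := gmres_step T c C hc hC hcoer hbound v
      refine ⟨(1 - Polynomial.C α * Polynomial.X) * p, ?_, ?_, ?_⟩
      · refine le_trans (Polynomial.natDegree_mul_le) ?_
        have h1 : (1 - Polynomial.C α * Polynomial.X).natDegree ≤ 1 := by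
          refine le_trans (Polynomial.natDegree_sub_le _ _) ?_
          have := Polynomial.natDegree_C_mul_le α Polynomial.X
          simp only [Polynomial.natDegree_one, Polynomial.natDegree_X] at *
          omega
        omega
      · simp [heval]
      · have happ : (Polynomial.aeval T ((1 - Polynomial.C α * Polynomial.X) * p)) r0
            = v - α • T v := by
          rw [map_mul, ContinuousLinearMap.mul_apply, ← hv, map_sub, map_one, map_mul,
            Polynomial.aeval_C, Polynomial.aeval_X]
          simp [Algebra.algebraMap_eq_smul_one, ContinuousLinearMap.mul_apply]
        rw [happ]
        calc ‖v - α • T v‖ ^ 2 ≤ B * ‖v‖ ^ 2 := hα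
          _ ≤ B * (B ^ n * ‖r0‖ ^ 2) := by
              exact mul_le_mul_of_nonneg_left hbnd hB0
          _ = B ^ (n + 1) * ‖r0‖ ^ 2 := by ring
  obtain ⟨p, hdeg, heval, hbnd⟩ := main m
  refine ⟨p, hdeg, heval, ?_⟩
  have hrw : B ^ ((m : ℝ) / 2) = Real.sqrt (B ^ m) := by
    rw [Real.sqrt_eq_rpow, ← Real.rpow_natCast B m, ← Real.rpow_mul hB0]
    ring_nf
  rw [hrw]
  have h1 := Real.sqrt_le_sqrt hbnd
  rwa [Real.sqrt_sq (norm_nonneg _), Real.sqrt_mul (by positivity) _,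
    Real.sqrt_sq (norm_nonneg _)] at h1
end
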